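/- Let A = (Σ, Q, I, F, δ) be a complete NBA and let S = S(⊒^{f}, ⊑^{f}) — i.e., ((p,σ,r), (p′,σ,r′)) ∈ S iff p′ ⊑^{f} p and r ⊑^{f} r′, using fair trace inclusion. If every transition of Sat(A, S) that is not a transition of A is transient in Sat(A, S), then S is good for saturation: L(Sat(A, S)) = L(A). -/

import Mathlib

/-- A nondeterministic automaton (used both as NBA and NFA):
initial states, accepting states, and a transition relation. -/
structure NA (A : Type*) (Q : Type*) where
  ini : Set Q
  acc : Set Q
  trans : Set (Q × A × Q)

namespace NA

variable {A Q Q₁ Q₂ : Type*}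

/-- Forward and backward completeness. -/
def Complete (M : NA A Q) : Prop :=
  ∀ (p : Q) (a : A), (∃ q, (q, a, p) ∈ M.trans) ∧ (∃ q, (p, a, q) ∈ M.trans)

/-- Infinite run on an infinite word. -/
def InfRun (M : NA A Q) (w : ℕ → A) (π : ℕ → Q) : Prop :=
  ∀ i, (π i, w i, π (i + 1)) ∈ M.trans

/-- Fairness: accepting states are visited infinitely often. -/
def Fair (M : NA A Q) (π : ℕ → Q) : Prop :=
  ∀ n, ∃ m, n ≤ m ∧ π m ∈ M.acc

/-- The ω-language of a Büchi automaton. -/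
def BuchiLang (M : NA A Q) : Set (ℕ → A) :=
  {w | ∃ π, π 0 ∈ M.ini ∧ M.InfRun w π ∧ M.Fair π}

/-- Finite run on a finite word (only the first `w.length + 1` values of `π` matter). -/
def FinRun (M : NA A Q) (w : List A) (π : ℕ → Q) : Prop :=
  ∀ (i : ℕ) (h : i < w.length), (π i, w.get ⟨i, h⟩, π (i + 1)) ∈ M.trans

/-- The finite-word language of an NFA. -/
def FinLang (M : NA A Q) : Set (List A) :=
  {w | ∃ π, π 0 ∈ M.ini ∧ M.FinRun w π ∧ π w.length ∈ M.acc}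

/-- Direct (forward) trace inclusion. -/
def DiTraceIncl (M : NA A Q₁) (N : NA A Q₂) (p : Q₁) (q : Q₂) : Prop :=
  ∀ (w : ℕ → A) (π : ℕ → Q₁), π 0 = p → M.InfRun w π →
    ∃ ρ : ℕ → Q₂, ρ 0 = q ∧ N.InfRun w ρ ∧ ∀ i, π i ∈ M.acc → ρ i ∈ N.acc

/-- Fair trace inclusion. -/
def FairTraceIncl (M : NA A Q₁) (N : NA A Q₂) (p : Q₁) (q : Q₂) : Prop :=
  ∀ (w : ℕ → A) (π : ℕ → Q₁), π 0 = p → M.InfRun w π →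
    ∃ ρ : ℕ → Q₂, ρ 0 = q ∧ N.InfRun w ρ ∧ (M.Fair π → N.Fair ρ)

/-- Backward direct trace inclusion. -/
def BwDiTraceIncl (M : NA A Q₁) (N : NA A Q₂) (p : Q₁) (q : Q₂) : Prop :=
  ∀ (w : List A) (π : ℕ → Q₁), π 0 ∈ M.ini → M.FinRun w π → π w.length = p →
    ∃ ρ : ℕ → Q₂, ρ 0 ∈ N.ini ∧ N.FinRun w ρ ∧ ρ w.length = q ∧
      ∀ i, i ≤ w.length → π i ∈ M.acc → ρ i ∈ N.acc

/-- Forward finite trace inclusion. -/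
def FwFinTraceIncl (M : NA A Q₁) (N : NA A Q₂) (p : Q₁) (q : Q₂) : Prop :=
  ∀ (w : List A) (π : ℕ → Q₁), π 0 = p → M.FinRun w π → π w.length ∈ M.acc →
    ∃ ρ : ℕ → Q₂, ρ 0 = q ∧ N.FinRun w ρ ∧ ρ w.length ∈ N.acc

/-- Backward finite trace inclusion. -/
def BwFinTraceIncl (M : NA A Q₁) (N : NA A Q₂) (p : Q₁) (q : Q₂) : Prop :=
  ∀ (w : List A) (π : ℕ → Q₁), π 0 ∈ M.ini → M.FinRun w π → π w.length = p →
    ∃ ρ : ℕ → Q₂, ρ 0 ∈ N.ini ∧ N.FinRun w ρ ∧ ρ w.length = q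

/-- Counting backward trace inclusion: the matching initial trace visits
accepting states at least as often. -/
def CountBwTraceIncl (M : NA A Q) (p q : Q) : Prop :=
  ∀ (w : List A) (π : ℕ → Q), π 0 ∈ M.ini → M.FinRun w π → π w.length = p →
    ∃ ρ : ℕ → Q, ρ 0 ∈ M.ini ∧ M.FinRun w ρ ∧ ρ w.length = q ∧
      {i | i ≤ w.length ∧ π i ∈ M.acc}.ncard ≤ {i | i ≤ w.length ∧ ρ i ∈ M.acc}.ncard

/-- `R` is a direct forward simulation. -/
def IsDiSim (M : NA A Q₁) (N : NA A Q₂) (R : Q₁ → Q₂ → Prop) : Prop :=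
  ∀ p q, R p q → (p ∈ M.acc → q ∈ N.acc) ∧
    ∀ a p', (p, a, p') ∈ M.trans → ∃ q', (q, a, q') ∈ N.trans ∧ R p' q'

/-- Direct forward simulation (the largest direct forward simulation). -/
def DiSim (M : NA A Q₁) (N : NA A Q₂) (p : Q₁) (q : Q₂) : Prop :=
  ∃ R, IsDiSim M N R ∧ R p q

/-- `R` is a backward direct simulation (matching accepting and initial states). -/
def IsBwDiSim (M : NA A Q₁) (N : NA A Q₂) (R : Q₁ → Q₂ → Prop) : Prop :=
  ∀ p q, R p q → (p ∈ M.acc → q ∈ N.acc) ∧ (p ∈ M.ini → q ∈ N.ini) ∧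
    ∀ a p', (p', a, p) ∈ M.trans → ∃ q', (q', a, q) ∈ N.trans ∧ R p' q'

/-- Backward direct simulation (the largest backward direct simulation). -/
def BwDiSim (M : NA A Q₁) (N : NA A Q₂) (p : Q₁) (q : Q₂) : Prop :=
  ∃ R, IsBwDiSim M N R ∧ R p q

/-- `R` is a backward finite-word simulation (matching only initial states). -/
def IsBwSim (M : NA A Q₁) (N : NA A Q₂) (R : Q₁ → Q₂ → Prop) : Prop :=
  ∀ p q, R p q → (p ∈ M.ini → q ∈ N.ini) ∧
    ∀ a p', (p', a, p) ∈ M.trans → ∃ q', (q', a, q) ∈ N.trans ∧ R p' q'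

/-- Backward finite-word simulation (the largest backward finite-word simulation). -/
def BwSim (M : NA A Q₁) (N : NA A Q₂) (p : Q₁) (q : Q₂) : Prop :=
  ∃ R, IsBwSim M N R ∧ R p q

/-- Strict version of a relation: `x ⊏ y` iff `x ⊑ y` and not `y ⊑ x`. -/
def StrictRel (R : Q₁ → Q₁ → Prop) (x y : Q₁) : Prop := R x y ∧ ¬ R y x

/-- Comparing two transitions endpoint-wise; they must carry the same symbol. -/
def PairRel (Rb Rf : Q₁ → Q₂ → Prop) (t : Q₁ × A × Q₁) (t' : Q₂ × A × Q₂) : Prop :=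
  t.2.1 = t'.2.1 ∧ Rb t.1 t'.1 ∧ Rf t.2.2 t'.2.2

/-- Pruned automaton: keep the transitions that are maximal w.r.t. `P`. -/
def prune (M : NA A Q) (P : (Q × A × Q) → (Q × A × Q) → Prop) : NA A Q :=
  ⟨M.ini, M.acc, {t | t ∈ M.trans ∧ ¬ ∃ t' ∈ M.trans, P t t'}⟩

/-- Cross-pruned automaton: remove transitions of `M` subsumed by transitions of `N`. -/
def pruneAB (M : NA A Q₁) (N : NA A Q₂) (P : (Q₁ × A × Q₁) → (Q₂ × A × Q₂) → Prop) :
    NA A Q₁ :=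
  ⟨M.ini, M.acc, {t | t ∈ M.trans ∧ ¬ ∃ t' ∈ N.trans, P t t'}⟩

/-- Saturated automaton: add every transition `S`-below an existing transition. -/
def saturate (M : NA A Q) (S : (Q × A × Q) → (Q × A × Q) → Prop) : NA A Q :=
  ⟨M.ini, M.acc, {t | ∃ t' ∈ M.trans, S t t'}⟩

/-- A transition is transient if it occurs at most once in every trace. -/
def Transient (M : NA A Q) (t : Q × A × Q) : Prop :=
  ∀ (w : ℕ → A) (π : ℕ → Q), M.InfRun w π →
    ∀ i j, (π i, w i, π (i + 1)) = t → (π j, w j, π (j + 1)) = t → i = j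

/-- Equivalence class of `q` w.r.t. the equivalence induced by the preorder `R`. -/
def cls (R : Q → Q → Prop) (q : Q) : Set Q := {x | R q x ∧ R x q}

/-- Quotient automaton by the preorder `R`; equivalence classes are modeled as
the corresponding subsets of `Q`. -/
def quot (M : NA A Q) (R : Q → Q → Prop) : NA A (Set Q) :=
  ⟨{c | ∃ q ∈ M.ini, c = cls R q},
   {c | ∃ q ∈ M.acc, c = cls R q},
   {t | ∃ q₁ q₂, t.1 = cls R q₁ ∧ t.2.2 = cls R q₂ ∧ (q₁, t.2.1, q₂) ∈ M.trans}⟩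

/-- `R`-jumping run: before each transition, jump to an `R`-larger state. -/
def JumpRun (M : NA A Q) (R : Q → Q → Prop) (w : ℕ → A) (π π' : ℕ → Q) : Prop :=
  ∀ i, R (π i) (π' i) ∧ (π' i, w i, π (i + 1)) ∈ M.trans

/-- A jumping run is fair if it is accepting at infinitely many steps. -/
def JumpFair (M : NA A Q) (R : Q → Q → Prop) (π π' : ℕ → Q) : Prop :=
  ∀ n, ∃ m, n ≤ m ∧ ∃ q'' ∈ M.acc, R (π m) q'' ∧ R q'' (π' m)

end NA

section GfsHelpers
variable {A Q : Type*}

private lemma fti_refl (M : NA A Q) (p : Q) : M.FairTraceIncl M p p :=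
  fun _ π h hrun => ⟨π, h, hrun, id⟩

private lemma key_ind (M : NA A Q)
    (S : (Q × A × Q) → (Q × A × Q) → Prop)
    (hS : S = NA.PairRel (fun p p' => M.FairTraceIncl M p' p) (M.FairTraceIncl M)) :
    ∀ (n : ℕ) (w : ℕ → A) (π : ℕ → Q), π 0 ∈ M.ini →
      (M.saturate S).InfRun w π → (M.saturate S).Fair π →
      {i | (π i, w i, π (i+1)) ∉ M.trans}.Finite →
      {i | (π i, w i, π (i+1)) ∉ M.trans}.ncard ≤ n →
      w ∈ M.BuchiLang := by
  intro n
  induction n with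
  | zero =>
    intro w π hini hrun hfair hfin hcard
    have hemp : {i | (π i, w i, π (i+1)) ∉ M.trans} = ∅ := by
      rw [← Set.ncard_eq_zero hfin]; omega
    refine ⟨π, hini, fun i => ?_, hfair⟩
    by_contra h
    have : i ∈ ({i | (π i, w i, π (i+1)) ∉ M.trans} : Set ℕ) := h
    rw [hemp] at this; exact this
  | succ n ih =>
    intro w π hini hrun hfair hfin hcard
    by_cases hemp : {i | (π i, w i, π (i+1)) ∉ M.trans} = ∅
    · refine ⟨π, hini, fun i => ?_, hfair⟩
      by_contra h
      have : i ∈ ({i | (π i, w i, π (i+1)) ∉ M.trans} : Set ℕ) := h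
      rw [hemp] at this; exact this
    · obtain ⟨i, hi, hmax⟩ := Set.Finite.exists_maximalFor id _ hfin (Set.nonempty_iff_ne_empty.2 hemp)
      have hgood : ∀ k, i < k → (π k, w k, π (k+1)) ∈ M.trans := by
        intro k hk
        by_contra h
        have := hmax h (le_of_lt hk)
        simp only [id] at this
        omega
      -- extract the witness transition
      have hsat : (π i, w i, π (i+1)) ∈ (M.saturate S).trans := hrun i
      obtain ⟨t', ht', hStt'⟩ := hsat
      rw [hS] at hStt'
      obtain ⟨heq, hRb, hRf⟩ := hStt'
      obtain ⟨p', a', r'⟩ := t'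
      simp only at heq hRb hRf
      subst heq
      -- suffix run of M from π (i+1)
      set w1 : ℕ → A := fun j => w (i+1+j) with hw1
      have hrun1 : M.InfRun w1 (fun j => π (i+1+j)) := by
        intro j
        exact hgood (i+1+j) (by omega)
      have hfair1 : M.Fair (fun j => π (i+1+j)) := by
        intro n
        obtain ⟨m, hm, hacc⟩ := hfair (n + (i+1))
        refine ⟨m - (i+1), by omega, ?_⟩
        have : i + 1 + (m - (i+1)) = m := by omega
        have hacc' : π m ∈ M.acc := hacc
        simpa [this] using hacc'
      obtain ⟨ρ, hρ0, hρrun, hρfair'⟩ := hRf w1 (fun j => π (i+1+j)) rfl hrun1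
      have hρfair : M.Fair ρ := hρfair' hfair1
      -- run from p' : p' then ρ
      set w0 : ℕ → A := fun j => w (i+j) with hw0
      set σ2 : ℕ → Q := fun j => if j = 0 then p' else ρ (j - 1) with hσ2
      have hσ2run : M.InfRun w0 σ2 := by
        intro j
        cases j with
        | zero =>
          have he : (σ2 0, w0 0, σ2 1) = (p', w i, r') := by
            simp [hσ2, hw0, hρ0]
          rw [he]; exact ht'
        | succ k =>
          have h1 : σ2 (k+1) = ρ k := by simp [hσ2]
          have h2 : σ2 (k+2) = ρ (k+1) := by simp [hσ2]
          have h3 : w0 (k+1) = w1 k := by simp [hw0, hw1]; ring_nf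
          rw [h1, h2, h3]; exact hρrun k
      have hσ2fair : M.Fair σ2 := by
        intro n
        obtain ⟨m, hm, hacc⟩ := hρfair n
        exact ⟨m + 1, by omega, by simpa [hσ2] using hacc⟩
      obtain ⟨τ, hτ0, hτrun, hτfair'⟩ := hRb w0 σ2 rfl hσ2run
      have hτfair : M.Fair τ := hτfair' hσ2fair
      -- glued run
      set π' : ℕ → Q := fun k => if k ≤ i then π k else τ (k - i) with hπ'
      have hπ'lt : ∀ k, k ≤ i → π' k = π k := by intro k hk; simp [hπ', hk]
      have hπ'ge : ∀ k, i ≤ k → π' k = τ (k - i) := by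
        intro k hk
        rcases Nat.eq_or_lt_of_le hk with h | h
        · subst h; simp [hπ', hτ0]
        · simp [hπ', Nat.not_le.2 h]
      have hτtrans : M.trans ⊆ (M.saturate S).trans := by
        intro t ht
        exact ⟨t, ht, by rw [hS]; exact ⟨rfl, fti_refl M _, fti_refl M _⟩⟩
      have hgood' : ∀ k, i ≤ k → (π' k, w k, π' (k+1)) ∈ M.trans := by
        intro k hk
        rw [hπ'ge k hk, hπ'ge (k+1) (by omega)]
        have hk1 : k + 1 - i = (k - i) + 1 := by omega
        have hwk : w k = w0 (k - i) := by simp [hw0]; congr 1; omega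
        rw [hk1, hwk]; exact hτrun (k - i)
      have hπ'run : (M.saturate S).InfRun w π' := by
        intro k
        rcases Nat.lt_or_ge k i with h | h
        · rw [hπ'lt k (le_of_lt h), hπ'lt (k+1) (by omega)]
          exact hrun k
        · exact hτtrans (hgood' k h)
      have hπ'fair : (M.saturate S).Fair π' := by
        intro n
        obtain ⟨m, hm, hacc⟩ := hτfair (n + 1)
        refine ⟨i + m, by omega, ?_⟩
        have : π' (i + m) = τ m := by rw [hπ'ge (i+m) (by omega)]; congr 1; omega
        rw [this]; exact hacc
      have hsub : {k | (π' k, w k, π' (k+1)) ∉ M.trans} ⊆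
          {k | (π k, w k, π (k+1)) ∉ M.trans} \ {i} := by
        intro k hk
        simp only [Set.mem_setOf_eq] at hk
        rcases Nat.lt_or_ge k i with h | h
        · rw [hπ'lt k (le_of_lt h), hπ'lt (k+1) (by omega)] at hk
          exact ⟨hk, by simp; omega⟩
        · exact absurd (hgood' k h) hk
      have hfin' : {k | (π' k, w k, π' (k+1)) ∉ M.trans}.Finite :=
        hfin.diff.subset hsub
      have hcard' : {k | (π' k, w k, π' (k+1)) ∉ M.trans}.ncard ≤ n := by
        have h1 : {k | (π' k, w k, π' (k+1)) ∉ M.trans}.ncard ≤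
            ({k | (π k, w k, π (k+1)) ∉ M.trans} \ {i}).ncard :=
          Set.ncard_le_ncard hsub hfin.diff
        have h2 : ({k | (π k, w k, π (k+1)) ∉ M.trans} \ {i}).ncard <
            {k | (π k, w k, π (k+1)) ∉ M.trans}.ncard :=
          Set.ncard_diff_singleton_lt_of_mem hi hfin
        omega
      exact ih w π' (by rw [hπ'lt 0 (by omega)]; exact hini) hπ'run hπ'fair hfin' hcard'

end GfsHelpers

/-- `S(⊒ᶠ, ⊑ᶠ)` using fair trace inclusion is good for saturation
on complete NBAs, provided every newly added transition is transient in the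
saturated automaton. -/
theorem saturate_fairTraceIncl_transient_gfs
    {A Q : Type*} [Fintype A] [Fintype Q] (M : NA A Q) (hM : M.Complete)
    (S : (Q × A × Q) → (Q × A × Q) → Prop)
    (hS : S = NA.PairRel (fun p p' => M.FairTraceIncl M p' p) (M.FairTraceIncl M))
    (htransient : ∀ t, t ∈ (M.saturate S).trans → t ∉ M.trans →
      (M.saturate S).Transient t) :
    (M.saturate S).BuchiLang = M.BuchiLang := by
  ext w
  constructor
  · rintro ⟨π, hini, hrun, hfair⟩
    have hfin : {i | (π i, w i, π (i+1)) ∉ M.trans}.Finite := by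
      have hinj : Set.InjOn (fun i => (π i, w i, π (i+1)))
          {i | (π i, w i, π (i+1)) ∉ M.trans} := by
        intro i hi j hj hij
        exact htransient (π i, w i, π (i+1)) (hrun i) hi w π hrun i j rfl hij.symm
      exact Set.Finite.of_finite_image (Set.toFinite _) hinj
    exact key_ind M S hS _ w π hini hrun hfair hfin le_rfl
  · rintro ⟨π, hini, hrun, hfair⟩
    exact ⟨π, hini, fun i => ⟨_, hrun i,
      by rw [hS]; exact ⟨rfl, fti_refl M _, fti_refl M _⟩⟩, hfair⟩
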